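/- In the pure braid group P_3, the subgroup Q_{{2}} ∩ Q_{{3}} is not finitely generated. -/

import Mathlib

/-!
Common setup: the pure braid group `P_n` as a presented group, the subgroups
`P_S` and `Q_S`, the characterization of the homomorphisms `φ_S`, the support
`σ(x)`, and monic commutators.
-/

/-- The free-group generator corresponding to the pure braid generator
`p_{a,b}` for `a < b` (indices in `Fin n`, so strand `i+1` of `{1,…,n}`
corresponds to `i : Fin n`). -/
def pf {n : ℕ} (a b : Fin n) (h : a < b) :
    FreeGroup {q : Fin n × Fin n // q.1 < q.2} :=
  FreeGroup.of ⟨(a, b), h⟩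

/-- The defining relations (A), (B), (C) of the pure braid group `P_n`,
each written in the form `lhs⁻¹ * rhs` for an equation `lhs = rhs`. -/
def braidRels (n : ℕ) : Set (FreeGroup {q : Fin n × Fin n // q.1 < q.2}) :=
  -- (A) first equality: p_{a,b} p_{a,c} p_{b,c} = p_{a,c} p_{b,c} p_{a,b}
  {r | ∃ (a b c : Fin n) (hab : a < b) (hbc : b < c),
      r = (pf a b hab * pf a c (hab.trans hbc) * pf b c hbc)⁻¹ *
          (pf a c (hab.trans hbc) * pf b c hbc * pf a b hab)} ∪
  -- (A) second equality: p_{a,b} p_{a,c} p_{b,c} = p_{b,c} p_{a,b} p_{a,c}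
  {r | ∃ (a b c : Fin n) (hab : a < b) (hbc : b < c),
      r = (pf a b hab * pf a c (hab.trans hbc) * pf b c hbc)⁻¹ *
          (pf b c hbc * pf a b hab * pf a c (hab.trans hbc))} ∪
  -- (B) first: p_{a,b} p_{c,d} = p_{c,d} p_{a,b}
  {r | ∃ (a b c d : Fin n) (hab : a < b) (hbc : b < c) (hcd : c < d),
      r = (pf a b hab * pf c d hcd)⁻¹ * (pf c d hcd * pf a b hab)} ∪
  -- (B) second: p_{a,d} p_{b,c} = p_{b,c} p_{a,d}
  {r | ∃ (a b c d : Fin n) (hab : a < b) (hbc : b < c) (hcd : c < d),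
      r = (pf a d (hab.trans (hbc.trans hcd)) * pf b c hbc)⁻¹ *
          (pf b c hbc * pf a d (hab.trans (hbc.trans hcd)))} ∪
  -- (C): p_{a,c} (p_{b,c}⁻¹ p_{b,d} p_{b,c}) = (p_{b,c}⁻¹ p_{b,d} p_{b,c}) p_{a,c}
  {r | ∃ (a b c d : Fin n) (hab : a < b) (hbc : b < c) (hcd : c < d),
      r = (pf a c (hab.trans hbc) * ((pf b c hbc)⁻¹ * pf b d (hbc.trans hcd) * pf b c hbc))⁻¹ *
          ((pf b c hbc)⁻¹ * pf b d (hbc.trans hcd) * pf b c hbc * pf a c (hab.trans hbc))}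

/-- The pure braid group `P_n`, given by the presentation above. -/
abbrev PB (n : ℕ) := PresentedGroup (braidRels n)

/-- The generator `p_{a,b}` of the pure braid group, for `a < b`. -/
def p {n : ℕ} (a b : Fin n) (h : a < b) : PB n := PresentedGroup.of ⟨(a, b), h⟩

/-- `P_S`: the subgroup of `P_n` generated by all `p_{a,b}` with `a ∈ S` and `b ∈ S`. -/
def PS {n : ℕ} (S : Set (Fin n)) : Subgroup (PB n) :=
  Subgroup.closure {x | ∃ (a b : Fin n) (h : a < b), a ∈ S ∧ b ∈ S ∧ x = p a b h}

/-- `Q_S`: the subgroup of `P_n` generated by all `p_{a,b}` with `a ∈ S` or `b ∈ S`. -/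
def QS {n : ℕ} (S : Set (Fin n)) : Subgroup (PB n) :=
  Subgroup.closure {x | ∃ (a b : Fin n) (h : a < b), (a ∈ S ∨ b ∈ S) ∧ x = p a b h}

/-- `IsPhi S φ` says that `φ : P_n → P_n` is the homomorphism `φ_S`, i.e. it sends
`p_{a,b}` to itself if `a ∉ S` and `b ∉ S`, and to `1` otherwise. -/
def IsPhi {n : ℕ} (S : Set (Fin n)) (φ : PB n →* PB n) : Prop :=
  ∀ (a b : Fin n) (h : a < b),
    (a ∉ S ∧ b ∉ S → φ (p a b h) = p a b h) ∧ ((a ∈ S ∨ b ∈ S) → φ (p a b h) = 1)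

/-- The support `σ(x)` of `x ∈ P_n`: the intersection of all `S` with `x ∈ P_S`. -/
def support {n : ℕ} (x : PB n) : Set (Fin n) := ⋂₀ {S | x ∈ PS S}

/-- Monic commutators: the smallest set of elements of `P_n` containing all
`p_{a,b}` and `p_{a,b}⁻¹` and closed under taking nontrivial commutators
`[x,y] = x⁻¹ y⁻¹ x y`. -/
inductive IsMonic {n : ℕ} : PB n → Prop
  | of (a b : Fin n) (h : a < b) : IsMonic (p a b h)
  | inv (a b : Fin n) (h : a < b) : IsMonic (p a b h)⁻¹
  | comm (x y : PB n) : IsMonic x → IsMonic y → x⁻¹ * y⁻¹ * x * y ≠ 1 →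
      IsMonic (x⁻¹ * y⁻¹ * x * y)

/-- in `P_3`, the subgroup `Q_{{2}} ∩ Q_{{3}}` is not finitely
generated.  (Strand `i` of `{1,2,3}` corresponds to `i - 1 : Fin 3`, so
`Q_{{2}} = QS {1}` and `Q_{{3}} = QS {2}`.) -/
-- abbreviations
def aa : PB 3 := p 0 1 (by decide)
def bb : PB 3 := p 0 2 (by decide)
def cc : PB 3 := p 1 2 (by decide)

lemma mk_rel {r : FreeGroup {q : Fin 3 × Fin 3 // q.1 < q.2}} (hr : r ∈ braidRels 3) :
    PresentedGroup.mk (braidRels 3) r = 1 :=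
  (QuotientGroup.eq_one_iff r).2 (Subgroup.subset_normalClosure hr)

lemma mk_pf {a b : Fin 3} (h : a < b) :
    PresentedGroup.mk (braidRels 3) (pf a b h) = p a b h := rfl

lemma rel1 : aa * bb * cc = bb * cc * aa := by
  have h01 : (0:Fin 3) < 1 := by decide
  have h12 : (1:Fin 3) < 2 := by decide
  have hr : ((pf 0 1 h01 * pf 0 2 (h01.trans h12) * pf 1 2 h12)⁻¹ *
      (pf 0 2 (h01.trans h12) * pf 1 2 h12 * pf 0 1 h01)) ∈ braidRels 3 := by
    left; left; left; left
    exact ⟨0, 1, 2, h01, h12, rfl⟩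
  have := mk_rel hr
  simp only [map_mul, map_inv, mk_pf] at this
  exact inv_mul_eq_one.mp this

lemma rel2 : aa * bb * cc = cc * aa * bb := by
  have h01 : (0:Fin 3) < 1 := by decide
  have h12 : (1:Fin 3) < 2 := by decide
  have hr : ((pf 0 1 h01 * pf 0 2 (h01.trans h12) * pf 1 2 h12)⁻¹ *
      (pf 1 2 h12 * pf 0 1 h01 * pf 0 2 (h01.trans h12))) ∈ braidRels 3 := by
    left; left; left; right
    exact ⟨0, 1, 2, h01, h12, rfl⟩
  have := mk_rel hr
  simp only [map_mul, map_inv, mk_pf] at this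
  exact inv_mul_eq_one.mp this

def dd : PB 3 := aa * bb * cc

lemma comm_b_dd : bb * dd = dd * bb := by
  have h1 : dd = bb * cc * aa := rel1
  have h2 : dd = cc * aa * bb := rel2
  calc bb * dd = bb * (cc * aa * bb) := by rw [← h2]
    _ = (bb * cc * aa) * bb := by group
    _ = dd * bb := by rw [← h1]

lemma comm_c_dd : cc * dd = dd * cc := by
  have h2 : dd = cc * aa * bb := rel2
  calc cc * dd = cc * (aa * bb * cc) := rfl
    _ = (cc * aa * bb) * cc := by group
    _ = dd * cc := by rw [← h2]

lemma comm_c_dd' : Commute cc dd := comm_c_dd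

lemma comm_b_dd' : Commute bb dd := comm_b_dd

lemma comm_w_dd : Commute (cc⁻¹ * bb⁻¹) dd :=
  Commute.mul_left (comm_c_dd'.inv_left) (comm_b_dd'.inv_left)

lemma aa_eq : aa = cc⁻¹ * bb⁻¹ * dd := by
  have h1 : dd = bb * cc * aa := rel1
  rw [h1]; group

def y (k : ℤ) : PB 3 := aa ^ k * cc * aa ^ (-k)

lemma y_eq (k : ℤ) : y k = (cc⁻¹ * bb⁻¹) ^ k * cc * ((cc⁻¹ * bb⁻¹) ^ k)⁻¹ := by
  have hw := comm_w_dd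
  have hak : aa ^ k = (cc⁻¹ * bb⁻¹) ^ k * dd ^ k := by
    rw [aa_eq]; exact hw.mul_zpow k
  have hcd : Commute cc (dd ^ k) := comm_c_dd'.zpow_right k
  have : dd ^ k * cc * (dd ^ k)⁻¹ = cc := by
    rw [← hcd.eq]; group
  calc y k = aa ^ k * cc * (aa ^ k)⁻¹ := by rw [y, zpow_neg]
    _ = ((cc⁻¹ * bb⁻¹) ^ k * dd ^ k) * cc * ((cc⁻¹ * bb⁻¹) ^ k * dd ^ k)⁻¹ := by rw [hak]
    _ = (cc⁻¹ * bb⁻¹) ^ k * (dd ^ k * cc * (dd ^ k)⁻¹) * ((cc⁻¹ * bb⁻¹) ^ k)⁻¹ := by group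
    _ = (cc⁻¹ * bb⁻¹) ^ k * cc * ((cc⁻¹ * bb⁻¹) ^ k)⁻¹ := by rw [this]

def genmap {G : Type*} [Group G] (A B C : G) : {q : Fin 3 × Fin 3 // q.1 < q.2} → G :=
  fun q => if q.1.2 = 2 then (if q.1.1 = 0 then B else C) else A

lemma fin3_cases {a b c : Fin 3} (hab : a < b) (hbc : b < c) : a = 0 ∧ b = 1 ∧ c = 2 := by
  revert hab hbc; revert a b c; decide

lemma no_four {a b c d : Fin 3} (hab : a < b) (hbc : b < c) (hcd : c < d) : False := by
  revert hab hbc hcd; revert a b c d; decide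

lemma lift_word {G : Type*} [Group G] (A B C : G) {a b : Fin 3} (h : a < b) :
    FreeGroup.lift (genmap A B C) (pf a b h) = genmap A B C ⟨(a, b), h⟩ :=
  FreeGroup.lift_apply_of

lemma genmap01 {G : Type*} [Group G] (A B C : G) (h : (0:Fin 3) < 1) :
    genmap A B C ⟨(0, 1), h⟩ = A := rfl

lemma genmap02 {G : Type*} [Group G] (A B C : G) (h : (0:Fin 3) < 2) :
    genmap A B C ⟨(0, 2), h⟩ = B := rfl

lemma genmap12 {G : Type*} [Group G] (A B C : G) (h : (1:Fin 3) < 2) :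
    genmap A B C ⟨(1, 2), h⟩ = C := rfl

lemma rels_ok {G : Type*} [Group G] (A B C : G)
    (h1 : (A * B * C)⁻¹ * (B * C * A) = 1) (h2 : (A * B * C)⁻¹ * (C * A * B) = 1) :
    ∀ r ∈ braidRels 3, FreeGroup.lift (genmap A B C) r = 1 := by
  intro r hr
  rcases hr with ((((⟨a, b, c, hab, hbc, rfl⟩ | ⟨a, b, c, hab, hbc, rfl⟩) |
      ⟨a, b, c, d, hab, hbc, hcd, rfl⟩) | ⟨a, b, c, d, hab, hbc, hcd, rfl⟩) |
      ⟨a, b, c, d, hab, hbc, hcd, rfl⟩)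
  · obtain ⟨rfl, rfl, rfl⟩ := fin3_cases hab hbc
    simp only [map_mul, map_inv, lift_word, genmap01, genmap02, genmap12]
    exact h1
  · obtain ⟨rfl, rfl, rfl⟩ := fin3_cases hab hbc
    simp only [map_mul, map_inv, lift_word, genmap01, genmap02, genmap12]
    exact h2
  · exact (no_four hab hbc hcd).elim
  · exact (no_four hab hbc hcd).elim
  · exact (no_four hab hbc hcd).elim

lemma hom_of_p {G : Type*} [Group G] (A B C : G)
    (h : ∀ r ∈ braidRels 3, FreeGroup.lift (genmap A B C) r = 1) :
    (PresentedGroup.toGroup h) aa = A ∧ (PresentedGroup.toGroup h) bb = B ∧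
      (PresentedGroup.toGroup h) cc = C :=
  ⟨PresentedGroup.toGroup.of h, PresentedGroup.toGroup.of h, PresentedGroup.toGroup.of h⟩

lemma exists_hom {G : Type*} [Group G] (A C : G) :
    ∃ f : PB 3 →* G, f aa = A ∧ f bb = A⁻¹ * C⁻¹ ∧ f cc = C := by
  refine ⟨PresentedGroup.toGroup (rels_ok A (A⁻¹ * C⁻¹) C (by group) (by group)), ?_⟩
  exact hom_of_p _ _ _ _

lemma exists_hom_comm {G : Type*} [CommGroup G] (A B C : G) :
    ∃ f : PB 3 →* G, f aa = A ∧ f bb = B ∧ f cc = C := by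
  have h1 : (A * B * C)⁻¹ * (B * C * A) = 1 := by
    rw [inv_mul_eq_one]; exact mul_rotate A B C
  have h2 : (A * B * C)⁻¹ * (C * A * B) = 1 := by
    rw [inv_mul_eq_one]; exact (mul_rotate C A B).symm
  exact ⟨PresentedGroup.toGroup (rels_ok A B C h1 h2), hom_of_p _ _ _ _⟩

noncomputable section

/-- exponent-sum of `aa` homomorphism -/
def EE : PB 3 →* Multiplicative ℤ :=
  (exists_hom_comm (Multiplicative.ofAdd (1:ℤ)) 1 1).choose

lemma EE_aa : EE aa = Multiplicative.ofAdd (1:ℤ) :=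
  (exists_hom_comm (Multiplicative.ofAdd (1:ℤ)) 1 1).choose_spec.1

lemma EE_bb : EE bb = 1 := (exists_hom_comm (Multiplicative.ofAdd (1:ℤ)) 1 1).choose_spec.2.1

lemma EE_cc : EE cc = 1 := (exists_hom_comm (Multiplicative.ofAdd (1:ℤ)) 1 1).choose_spec.2.2

/-- the subgroup generated by all conjugates `aa^k cc aa^{-k}` -/
def K : Subgroup (PB 3) := Subgroup.closure {x | ∃ k : ℤ, x = y k}

def KM (m : ℕ) : Subgroup (PB 3) := Subgroup.closure {x | ∃ k : ℤ, |k| ≤ (m:ℤ) ∧ x = y k}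

lemma K_conj (j : ℤ) (x : PB 3) (hx : x ∈ K) : aa ^ j * x * aa ^ (-j) ∈ K := by
  induction hx using Subgroup.closure_induction with
  | mem z hz =>
      obtain ⟨k, rfl⟩ := hz
      have : aa ^ j * y k * aa ^ (-j) = y (j + k) := by
        simp only [y]; group
      rw [this]
      exact Subgroup.subset_closure ⟨j + k, rfl⟩
  | one =>
      have : aa ^ j * 1 * aa ^ (-j) = 1 := by group
      rw [this]; exact one_mem K
  | mul u v hu hv hu' hv' =>
      have : aa ^ j * (u * v) * aa ^ (-j) =
          (aa ^ j * u * aa ^ (-j)) * (aa ^ j * v * aa ^ (-j)) := by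
        rw [zpow_neg]; group
      rw [this]; exact mul_mem hu' hv'
  | inv u hu hu' =>
      have : aa ^ j * u⁻¹ * aa ^ (-j) = (aa ^ j * u * aa ^ (-j))⁻¹ := by
        rw [zpow_neg]; group
      rw [this]; exact inv_mem hu'

/-- auxiliary subgroup: elements `h` with `aa^{-E h} h ∈ K` -/
def SS : Subgroup (PB 3) where
  carrier := {h | aa ^ (-(EE h).toAdd) * h ∈ K}
  one_mem' := by simp only [Set.mem_setOf_eq]; simp
  mul_mem' := by
    intro x z hx hz
    simp only [Set.mem_setOf_eq] at *
    have hE : (EE (x * z)).toAdd = (EE x).toAdd + (EE z).toAdd := by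
      rw [map_mul]; rfl
    have hid : aa ^ (-((EE x).toAdd + (EE z).toAdd)) * (x * z) =
        (aa ^ (-(EE z).toAdd) * (aa ^ (-(EE x).toAdd) * x) * aa ^ (-(-(EE z).toAdd))) *
          (aa ^ (-(EE z).toAdd) * z) := by
      rw [neg_add, zpow_add, zpow_neg, zpow_neg, zpow_neg]
      group
    rw [hE, hid]
    exact mul_mem (K_conj _ _ hx) hz
  inv_mem' := by
    intro x hx
    simp only [Set.mem_setOf_eq] at *
    have hE : (EE x⁻¹).toAdd = -(EE x).toAdd := by rw [map_inv]; rfl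
    have hid : aa ^ (-(EE x⁻¹).toAdd) * x⁻¹ =
        aa ^ ((EE x).toAdd) * (aa ^ (-(EE x).toAdd) * x)⁻¹ * aa ^ (-((EE x).toAdd)) := by
      rw [hE, neg_neg, zpow_neg]
      group
    rw [hid]
    exact K_conj _ _ (inv_mem hx)

lemma pairs3 : ∀ {a b : Fin 3}, a < b → (a = 0 ∧ b = 1) ∨ (a = 0 ∧ b = 2) ∨ (a = 1 ∧ b = 2) := by
  decide

lemma aa_mem1 : aa ∈ QS ({1} : Set (Fin 3)) :=
  Subgroup.subset_closure ⟨0, 1, by decide, Or.inr rfl, rfl⟩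

lemma cc_mem1 : cc ∈ QS ({1} : Set (Fin 3)) :=
  Subgroup.subset_closure ⟨1, 2, by decide, Or.inl rfl, rfl⟩

lemma bb_mem2 : bb ∈ QS ({2} : Set (Fin 3)) :=
  Subgroup.subset_closure ⟨0, 2, by decide, Or.inr rfl, rfl⟩

lemma cc_mem2 : cc ∈ QS ({2} : Set (Fin 3)) :=
  Subgroup.subset_closure ⟨1, 2, by decide, Or.inr rfl, rfl⟩

lemma QS1_le_SS : QS ({1} : Set (Fin 3)) ≤ SS := by
  rw [QS, Subgroup.closure_le]
  rintro x ⟨a, b, h, hor, rfl⟩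
  obtain ⟨rfl, rfl⟩ | ⟨rfl, rfl⟩ | ⟨rfl, rfl⟩ := pairs3 h
  · show aa ^ (-(EE aa).toAdd) * aa ∈ K
    rw [EE_aa]
    simp only [toAdd_ofAdd]
    have : aa ^ (-(1:ℤ)) * aa = 1 := by group
    rw [this]; exact one_mem K
  · exfalso; simpa using hor
  · show aa ^ (-(EE cc).toAdd) * cc ∈ K
    rw [EE_cc]
    simp only [toAdd_one, neg_zero, zpow_zero, one_mul]
    have : cc = y 0 := by simp only [y, neg_zero, zpow_zero, one_mul, mul_one]
    rw [this]; exact Subgroup.subset_closure ⟨0, rfl⟩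

lemma QS2_le_ker : QS ({2} : Set (Fin 3)) ≤ EE.ker := by
  rw [QS, Subgroup.closure_le]
  rintro x ⟨a, b, h, hor, rfl⟩
  obtain ⟨rfl, rfl⟩ | ⟨rfl, rfl⟩ | ⟨rfl, rfl⟩ := pairs3 h
  · exfalso; simpa using hor
  · exact EE_bb
  · exact EE_cc

lemma H_le_K : QS ({1} : Set (Fin 3)) ⊓ QS ({2} : Set (Fin 3)) ≤ K := by
  rintro h ⟨h1, h2⟩
  have hS : aa ^ (-(EE h).toAdd) * h ∈ K := QS1_le_SS h1
  have hE : EE h = 1 := QS2_le_ker h2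
  rw [hE] at hS
  simpa only [toAdd_one, neg_zero, zpow_zero, one_mul] using hS

lemma y_mem_H (k : ℤ) : y k ∈ QS ({1} : Set (Fin 3)) ⊓ QS ({2} : Set (Fin 3)) := by
  rw [Subgroup.mem_inf]
  constructor
  · exact mul_mem (mul_mem (zpow_mem aa_mem1 k) cc_mem1) (zpow_mem aa_mem1 (-k))
  · rw [y_eq]
    have hw : cc⁻¹ * bb⁻¹ ∈ QS ({2} : Set (Fin 3)) := mul_mem (inv_mem cc_mem2) (inv_mem bb_mem2)
    exact mul_mem (mul_mem (zpow_mem hw k) cc_mem2) (inv_mem (zpow_mem hw k))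

lemma KM_mono : Monotone KM := by
  intro m m' hmm
  exact Subgroup.closure_mono (fun x ⟨k, hk, hx⟩ => ⟨k, le_trans hk (by exact_mod_cast hmm), hx⟩)

lemma K_le_iSup : K ≤ ⨆ m : ℕ, KM m := by
  rw [K]
  apply Subgroup.closure_le _ |>.mpr
  rintro x ⟨k, rfl⟩
  have : y k ∈ KM k.natAbs := Subgroup.subset_closure ⟨k, by rw [Int.abs_eq_natAbs], rfl⟩
  exact Subgroup.mem_iSup_of_mem k.natAbs this

lemma mem_KM_of_mem_K {x : PB 3} (hx : x ∈ K) : ∃ m : ℕ, x ∈ KM m := by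
  have := K_le_iSup hx
  rwa [Subgroup.mem_iSup_of_directed (KM_mono.directed_le)] at this

section Wreath

variable (NN : ℕ) [NeZero NN]

abbrev Base := ZMod NN → Multiplicative (ZMod 2)

def shiftE (g : ZMod NN) : Base NN ≃* Base NN where
  toFun f := fun i => f (i - g)
  invFun f := fun i => f (i + g)
  left_inv f := funext fun i => by
    show f (i + g - g) = f i
    rw [add_sub_cancel_right]
  right_inv f := funext fun i => by
    show f (i - g + g) = f i
    rw [sub_add_cancel]
  map_mul' f g' := rfl

def shiftHom : Multiplicative (ZMod NN) →* MulAut (Base NN) where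
  toFun s := shiftE NN s.toAdd
  map_one' := by
    refine MulEquiv.ext fun f => funext fun i => ?_
    show f (i - 0) = f i
    rw [sub_zero]
  map_mul' s t := by
    refine MulEquiv.ext fun f => funext fun i => ?_
    show f (i - (s.toAdd + t.toAdd)) = f (i - s.toAdd - t.toAdd)
    rw [sub_sub]

abbrev GG := SemidirectProduct (Base NN) (Multiplicative (ZMod NN)) (shiftHom NN)

def delta (j : ZMod NN) : Base NN := fun i => if i = j then Multiplicative.ofAdd 1 else 1

def AA : GG NN := SemidirectProduct.inr (Multiplicative.ofAdd (1 : ZMod NN))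

def CCg : GG NN := SemidirectProduct.inl (delta NN 0)

lemma AA_conj_zpow (k : ℤ) :
    (AA NN) ^ k * CCg NN * (AA NN) ^ (-k) = SemidirectProduct.inl (delta NN (k : ZMod NN)) := by
  have hpow : (AA NN) ^ k = SemidirectProduct.inr (Multiplicative.ofAdd ((k : ZMod NN))) := by
    rw [AA, ← map_zpow]
    congr 1
    rw [← ofAdd_zsmul]
    congr 1
    rw [zsmul_eq_mul, mul_one]
  have hneg : (AA NN) ^ (-k) = ((AA NN) ^ k)⁻¹ := by rw [zpow_neg]
  rw [hneg, hpow, CCg, ← map_inv]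
  rw [← SemidirectProduct.inl_aut]
  congr 1
  funext i
  show (if i - (k : ZMod NN) = 0 then Multiplicative.ofAdd 1 else 1) = _
  simp only [sub_eq_zero]
  rfl

def LL (pt : ZMod NN) : Subgroup (GG NN) where
  carrier := {x | x.right = 1 ∧ x.left pt = 1}
  one_mem' := ⟨rfl, rfl⟩
  mul_mem' := by
    rintro x z ⟨hx1, hx2⟩ ⟨hz1, hz2⟩
    refine ⟨?_, ?_⟩
    · rw [SemidirectProduct.mul_right, hx1, hz1, mul_one]
    · rw [SemidirectProduct.mul_left, hx1, map_one]
      show x.left pt * z.left pt = 1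
      rw [hx2, hz2, mul_one]
  inv_mem' := by
    rintro x ⟨hx1, hx2⟩
    refine ⟨?_, ?_⟩
    · rw [SemidirectProduct.inv_right, hx1, inv_one]
    · rw [SemidirectProduct.inv_left, hx1, inv_one, map_one]
      show (x.left)⁻¹ pt = 1
      show (x.left pt)⁻¹ = 1
      rw [hx2, inv_one]

end Wreath


theorem not_fg :
    ¬ ((QS ({1} : Set (Fin 3))) ⊓ (QS ({2} : Set (Fin 3)))).FG := by
  classical
  rintro ⟨T, hT⟩
  have hTK : ∀ t ∈ T, ∃ m : ℕ, t ∈ KM m := by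
    intro t ht
    refine mem_KM_of_mem_K (H_le_K ?_)
    rw [← hT]
    exact Subgroup.subset_closure ht
  choose g hg using hTK
  set M : ℕ := T.sup (fun t => if h : t ∈ T then g t h else 0) with hM
  have hHle : QS ({1} : Set (Fin 3)) ⊓ QS ({2} : Set (Fin 3)) ≤ KM M := by
    rw [← hT, Subgroup.closure_le]
    intro t ht
    have ht' : t ∈ T := ht
    have h3 := Finset.le_sup (f := fun t => if h : t ∈ T then g t h else 0) ht'
    simp only [ht', dif_pos] at h3
    exact KM_mono h3 (hg t ht')
  have hy : y ((M : ℤ) + 1) ∈ KM M := hHle (y_mem_H _)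
  set NN := 2 * M + 3 with hNN
  haveI : NeZero NN := ⟨by omega⟩
  obtain ⟨f, hfa, hfb, hfc⟩ := exists_hom (AA NN) (CCg NN)
  have hfy : ∀ k : ℤ, f (y k) = SemidirectProduct.inl (delta NN (k : ZMod NN)) := by
    intro k
    rw [y, map_mul, map_mul, map_zpow, map_zpow, hfa, hfc]
    exact AA_conj_zpow NN k
  have hKLL : KM M ≤ (LL NN ((((M:ℤ)+1 : ℤ) : ZMod NN))).comap f := by
    rw [KM, Subgroup.closure_le]
    rintro x ⟨k, hk, rfl⟩
    have hb := abs_le.mp hk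
    show f (y k) ∈ LL NN _
    rw [hfy k]
    refine ⟨rfl, ?_⟩
    show delta NN (k : ZMod NN) ((((M:ℤ)+1 : ℤ) : ZMod NN)) = 1
    rw [delta, if_neg]
    intro hEq
    rw [ZMod.intCast_eq_intCast_iff] at hEq
    have hdvd := (Int.ModEq.dvd hEq.symm)
    have hpos : 0 < ((M:ℤ)+1) - k := by omega
    have := Int.le_of_dvd hpos hdvd
    have hNZ : (NN : ℤ) = 2 * (M:ℤ) + 3 := by rw [hNN]; push_cast; ring
    omega
  have hmem := hKLL hy
  have h2 := (hmem : f (y ((M:ℤ)+1)) ∈ LL NN _).2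
  rw [hfy] at h2
  have h3 : delta NN (((M:ℤ)+1 : ℤ) : ZMod NN) ((((M:ℤ)+1 : ℤ) : ZMod NN)) = 1 := h2
  rw [delta, if_pos rfl] at h3
  exact absurd h3 (by decide)
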